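/- Let Y_{n,j} be the out-degree of node j in a random ordered increasing k-tree of size n. Then P{Y_{n,j} = m} = binom(j - k/(k+1), j) / [binom(n - k/(k+1), n)·binom(n,j)] · ∑_{ℓ=0}^{m} binom(m,ℓ)(-1)^ℓ binom(n - k(2+ℓ)/(k+1), n-j), for n ≥ j ≥ 1 and m ≥ 0. -/

import Mathlib

/-- Generalized binomial coefficient `binom(x, n) = x(x-1)⋯(x-n+1)/n!`. -/
noncomputable def gbinom (x : ℝ) (n : ℕ) : ℝ :=
  (∏ i ∈ Finset.range n, (x - i)) / (Nat.factorial n)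

/-- `T_n = ∏_{ℓ=0}^{n-1}(1+(k+1)ℓ)`, the number of ordered increasing `k`-trees of size `n`. -/
noncomputable def Tcount (k n : ℕ) : ℝ :=
  ∏ ℓ ∈ Finset.range n, (1 + ((k : ℝ) + 1) * ℓ)

lemma gbinom_zero (x : ℝ) : gbinom x 0 = 1 := by simp [gbinom]

lemma gbinom_succ (x : ℝ) (r : ℕ) :
    gbinom x (r+1) = x / (r+1) * gbinom (x-1) r := by
  unfold gbinom
  rw [Finset.prod_range_succ']
  have h : ∀ i ∈ Finset.range r, x - (↑(i+1):ℝ) = (x-1) - i := by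
    intro i _; push_cast; ring
  rw [Finset.prod_congr rfl h, Nat.factorial_succ]
  have h1 : ((r:ℝ)+1) ≠ 0 := by positivity
  have h2 : ((Nat.factorial r : ℕ) : ℝ) ≠ 0 := by
    exact_mod_cast Nat.factorial_ne_zero r
  push_cast
  field_simp
  ring

lemma B_pos (k n : ℕ) : 0 < gbinom ((n:ℝ) - k/(k+1)) n := by
  unfold gbinom
  apply div_pos
  · apply Finset.prod_pos
    intro i hi
    have h1 : (i:ℝ) + 1 ≤ n := by exact_mod_cast Finset.mem_range.mp hi
    have h2 : (k:ℝ)/(k+1) < 1 := by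
      rw [div_lt_one (by positivity)]; linarith
    linarith
  · have := Nat.factorial_pos n
    exact_mod_cast this

lemma alt_sum (m : ℕ) :
    ∑ ℓ ∈ Finset.range (m+1), (Nat.choose m ℓ : ℝ) * (-1)^ℓ
      = if m = 0 then 1 else 0 := by
  have h := Int.alternating_sum_range_choose (n := m)
  have h2 := congrArg (fun z : ℤ => (z : ℝ)) h
  push_cast at h2
  rw [← h2]
  apply Finset.sum_congr rfl
  intro ℓ _; ring

lemma alt_sum_shift (m : ℕ) (G : ℕ → ℝ) (c d : ℝ) :
    ∑ ℓ ∈ Finset.range (m+1), (Nat.choose m ℓ : ℝ)*(-1)^ℓ * ((c - d*ℓ) * G ℓ)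
    = (c - d*m) * ∑ ℓ ∈ Finset.range (m+1), (Nat.choose m ℓ:ℝ)*(-1)^ℓ * G ℓ
      + d*m * ∑ ℓ ∈ Finset.range (m-1+1), (Nat.choose (m-1) ℓ:ℝ)*(-1)^ℓ * G ℓ := by
  rcases m with _ | m'
  · simp
  · have key : ∀ ℓ ∈ Finset.range (m'+1),
        ((m':ℝ) + 1 - ℓ) * (Nat.choose (m'+1) ℓ : ℝ) = ((m':ℝ)+1) * (Nat.choose m' ℓ : ℝ) := by
      intro ℓ hℓ
      have hℓ' : ℓ ≤ m' := Nat.lt_succ_iff.mp (Finset.mem_range.mp hℓ)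
      have h := Nat.choose_mul_succ_eq m' ℓ
      have h2 : ((Nat.choose m' ℓ * (m' + 1) : ℕ) : ℝ) = ((Nat.choose (m'+1) ℓ * (m' + 1 - ℓ) : ℕ) : ℝ) := by
        exact_mod_cast h
      rw [Nat.cast_mul, Nat.cast_mul, Nat.cast_sub (by omega)] at h2
      push_cast at h2
      linarith
    have split : ∑ ℓ ∈ Finset.range (m'+1+1), (Nat.choose (m'+1) ℓ : ℝ)*(-1)^ℓ * ((c - d*ℓ) * G ℓ)
        = ∑ ℓ ∈ Finset.range (m'+1+1), ((Nat.choose (m'+1) ℓ : ℝ)*(-1)^ℓ * ((c - d*((m':ℝ)+1)) * G ℓ)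
            + d * (((m':ℝ) + 1 - ℓ) * (Nat.choose (m'+1) ℓ : ℝ)) * ((-1)^ℓ * G ℓ)) := by
      apply Finset.sum_congr rfl
      intro ℓ _; ring
    rw [split, Finset.sum_add_distrib]
    congr 1
    · rw [Finset.mul_sum]
      apply Finset.sum_congr rfl; intro ℓ _; push_cast; ring
    · rw [Finset.sum_range_succ]
      simp only [Nat.add_sub_cancel]
      have hz : d * (((m':ℝ) + 1 - ((m'+1:ℕ):ℝ)) * (Nat.choose (m'+1) (m'+1) : ℝ)) * ((-1)^(m'+1) * G (m'+1)) = 0 := by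
        push_cast; ring
      rw [hz, add_zero, Finset.mul_sum]
      apply Finset.sum_congr rfl
      intro ℓ hℓ
      rw [mul_assoc d, key ℓ hℓ]
      push_cast; ring

lemma sum_step (k n j m : ℕ) (hj : j ≤ n) :
    ((k:ℝ)+1) * ((n:ℝ)+1-(j:ℝ)) *
      ∑ ℓ ∈ Finset.range (m+1), (Nat.choose m ℓ : ℝ) * (-1)^ℓ
          * gbinom (((n:ℝ)+1) - (k:ℝ)*(2+ℓ)/(k+1)) (n+1-j)
    = (((k:ℝ)+1)*((n:ℝ)+1) - (k:ℝ)*m - 2*k) *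
        ∑ ℓ ∈ Finset.range (m+1), (Nat.choose m ℓ : ℝ) * (-1)^ℓ
          * gbinom ((n:ℝ) - (k:ℝ)*(2+ℓ)/(k+1)) (n-j)
      + (k:ℝ)*m *
        ∑ ℓ ∈ Finset.range (m-1+1), (Nat.choose (m-1) ℓ : ℝ) * (-1)^ℓ
          * gbinom ((n:ℝ) - (k:ℝ)*(2+ℓ)/(k+1)) (n-j) := by
  have hk1 : ((k:ℝ)+1) ≠ 0 := by positivity
  have hnj : n+1-j = (n-j)+1 := by omega
  have hcast : ((n-j : ℕ):ℝ) = (n:ℝ) - j := Nat.cast_sub hj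
  have hj' : (j:ℝ) ≤ (n:ℝ) := by exact_mod_cast hj
  have hne' : (n:ℝ)+1-(j:ℝ) ≠ 0 := by linarith
  have hne2 : (n:ℝ)-(j:ℝ)+1 ≠ 0 := by linarith
  rw [Finset.mul_sum]
  rw [show (∑ ℓ ∈ Finset.range (m+1), ((k:ℝ)+1) * ((n:ℝ)+1-(j:ℝ)) * ((Nat.choose m ℓ : ℝ) * (-1)^ℓ * gbinom (((n:ℝ)+1) - (k:ℝ)*(2+ℓ)/(k+1)) (n+1-j)))
      = ∑ ℓ ∈ Finset.range (m+1), (Nat.choose m ℓ : ℝ)*(-1)^ℓ * (((((k:ℝ)+1)*((n:ℝ)+1) - 2*k) - (k:ℝ)*ℓ) * gbinom ((n:ℝ) - (k:ℝ)*(2+ℓ)/(k+1)) (n-j)) from ?_]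
  · rw [alt_sum_shift]; ring
  · apply Finset.sum_congr rfl
    intro ℓ _
    rw [hnj, gbinom_succ]
    rw [show ((n:ℝ)+1) - (k:ℝ)*(2+ℓ)/(k+1) - 1 = (n:ℝ) - (k:ℝ)*(2+ℓ)/(k+1) from by ring]
    rw [hcast]
    field_simp [hne2, hk1]
    ring

/-- The explicit formula for `P{Y_{n,j} = m}`, the probability that node `j` has
out-degree `m` in a random ordered increasing `k`-tree of size `n`: if
`f n j m = T_n · P{Y_{n,j}=m}` satisfies the recurrence coming from the growth process,
then `f n j m = T_n` times the displayed explicit formula. -/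
theorem ktree_outdegree_dist (k : ℕ) (hk : 1 ≤ k) (f : ℕ → ℕ → ℕ → ℝ)
    (hrec : ∀ n j m : ℕ, j < n → 1 ≤ j →
      f n j m = (((k : ℝ) + 1) * n - (k : ℝ) * m - 2 * k) * f (n - 1) j m
        + (k : ℝ) * m * f (n - 1) j (m - 1))
    (hinit0 : ∀ j : ℕ, 1 ≤ j → f j j 0 = Tcount k j)
    (hinit : ∀ j m : ℕ, 1 ≤ j → 1 ≤ m → f j j m = 0)
    (n j m : ℕ) (h1 : 1 ≤ j) (h2 : j ≤ n) :
    f n j m = Tcount k n *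
      (gbinom ((j : ℝ) - k / (k + 1)) j
        / (gbinom ((n : ℝ) - k / (k + 1)) n * (Nat.choose n j : ℝ))
        * ∑ ℓ ∈ Finset.range (m + 1),
            (Nat.choose m ℓ : ℝ) * (-1) ^ ℓ
              * gbinom ((n : ℝ) - (k : ℝ) * (2 + ℓ) / (k + 1)) (n - j)) := by
  revert m
  induction n, h2 using Nat.le_induction with
  | base =>
    intro m
    simp only [Nat.sub_self, Nat.choose_self, Nat.cast_one, mul_one, gbinom_zero]
    rw [alt_sum]
    rcases Nat.eq_zero_or_pos m with hm | hm
    · subst hm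
      rw [hinit0 j h1, if_pos rfl]
      have hB := (B_pos k j).ne'
      rw [div_self hB]
      ring
    · rw [hinit j m h1 hm, if_neg (by omega)]
      ring
  | succ n hn ih =>
    intro m
    have hrw := hrec (n+1) j m (by omega) h1
    simp only [Nat.add_sub_cancel] at hrw
    rw [hrw, ih m, ih (m-1)]
    push_cast
    have hk1 : ((k:ℝ)+1) ≠ 0 := by positivity
    have hBn : gbinom ((n:ℝ) - k/(k+1)) n ≠ 0 := (B_pos k n).ne'
    have hCn : (Nat.choose n j : ℝ) ≠ 0 := by
      exact_mod_cast Nat.cast_pos.mpr (Nat.choose_pos hn) |>.ne'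
    have hj' : (j:ℝ) ≤ (n:ℝ) := by exact_mod_cast hn
    have hnj : (n:ℝ)+1-(j:ℝ) ≠ 0 := by linarith
    have hn1 : ((n:ℝ)+1) ≠ 0 := by positivity
    have hS := sum_step k n j m hn
    have hT : Tcount k (n+1) = Tcount k n * (1 + ((k:ℝ)+1)*n) := Finset.prod_range_succ _ n
    have hB : gbinom (((n:ℝ)+1) - (k:ℝ)/(k+1)) (n+1)
        = (((n:ℝ)+1) - (k:ℝ)/(k+1)) / ((n:ℝ)+1) * gbinom ((n:ℝ) - (k:ℝ)/(k+1)) n := by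
      rw [gbinom_succ]
      rw [show ((n:ℝ)+1 - (k:ℝ)/(k+1)) - 1 = (n:ℝ) - (k:ℝ)/(k+1) from by ring]
    have hC' : (Nat.choose (n+1) j : ℝ) = ((n:ℝ)+1) * (Nat.choose n j : ℝ) / ((n:ℝ)+1-(j:ℝ)) := by
      have h := Nat.choose_mul_succ_eq n j
      have h2 : ((Nat.choose n j * (n+1) : ℕ) : ℝ) = ((Nat.choose (n+1) j * (n+1-j) : ℕ) : ℝ) := by
        exact_mod_cast h
      rw [Nat.cast_mul, Nat.cast_mul, Nat.cast_sub (by omega)] at h2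
      push_cast at h2
      field_simp
      linarith
    have key : Tcount k (n+1) *
        (gbinom ((j:ℝ) - (k:ℝ)/(k+1)) j
          / (gbinom (((n:ℝ)+1) - (k:ℝ)/(k+1)) (n+1) * (Nat.choose (n+1) j : ℝ))
          * ∑ ℓ ∈ Finset.range (m+1), (Nat.choose m ℓ : ℝ) * (-1)^ℓ
              * gbinom (((n:ℝ)+1) - (k:ℝ)*(2+ℓ)/(k+1)) (n+1-j))
        = Tcount k n * (gbinom ((j:ℝ) - (k:ℝ)/(k+1)) j
            / (gbinom ((n:ℝ) - (k:ℝ)/(k+1)) n * (Nat.choose n j : ℝ)))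
          * (((k:ℝ)+1) * ((n:ℝ)+1-(j:ℝ)) *
            ∑ ℓ ∈ Finset.range (m+1), (Nat.choose m ℓ : ℝ) * (-1)^ℓ
              * gbinom (((n:ℝ)+1) - (k:ℝ)*(2+ℓ)/(k+1)) (n+1-j)) := by
      have hna : ((n:ℝ)+1) - (k:ℝ)/(k+1) ≠ 0 := by
        have hlt : (k:ℝ)/(k+1) < 1 := by
          rw [div_lt_one (by positivity)]
          linarith [Nat.cast_nonneg (α := ℝ) k]
        have := Nat.cast_nonneg (α := ℝ) n
        linarith
      rw [hT, hB, hC']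
      have hfact : (1:ℝ) + ((k:ℝ)+1)*n = ((k:ℝ)+1) * (((n:ℝ)+1) - (k:ℝ)/(k+1)) := by
        field_simp
        ring
      rw [hfact]
      set Bj := gbinom ((j:ℝ) - (k:ℝ)/(k+1)) j with hBj
      set Bn := gbinom ((n:ℝ) - (k:ℝ)/(k+1)) n with hBndef
      set S1 := ∑ ℓ ∈ Finset.range (m+1), (Nat.choose m ℓ : ℝ) * (-1)^ℓ
              * gbinom (((n:ℝ)+1) - (k:ℝ)*(2+ℓ)/(k+1)) (n+1-j) with hS1def
      set a := (k:ℝ)/((k:ℝ)+1) with hadef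
      field_simp [hBn, hCn, hnj, hn1, hna]
    rw [key, hS]
    ring
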